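/- Let Φ ∈ ℝ^{M×N} be full spark, i.e., every set of at most M columns of Φ is linearly independent. Let x ∈ ℝ^N have support T with |T| = K, and set y = Φx. Let S ⊆ {1,…,N} be a nonempty index set with |S| ≤ M − K, and let ẑ minimize ‖y − Φ_S z‖₂ over z ∈ ℝ^{|S|}. Then the residue y − Φ_S ẑ is zero if and only if T ⊆ S. -/

import Mathlib

open scoped BigOperators
open Matrix

/-- Euclidean norm of a finite-dimensional real vector. -/
noncomputable def enorm {ι : Type*} [Fintype ι] (v : ι → ℝ) : ℝ :=
  Real.sqrt (∑ i, v i ^ 2)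

/-- `x` has at most `L` nonzero entries. -/
def SparseLe {N : ℕ} (L : ℕ) (x : Fin N → ℝ) : Prop :=
  (Finset.univ.filter fun i => x i ≠ 0).card ≤ L

/-- The restricted isometry constant of order `L`: the smallest `δ ≥ 0` such that
`(1-δ)‖x‖² ≤ ‖Φx‖² ≤ (1+δ)‖x‖²` for all `x` with at most `L` nonzero entries. -/
noncomputable def RIC {M N : ℕ} (Φ : Matrix (Fin M) (Fin N) ℝ) (L : ℕ) : ℝ :=
  sInf {δ : ℝ | 0 ≤ δ ∧ ∀ x : Fin N → ℝ, SparseLe L x →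
    (1 - δ) * ∑ i, x i ^ 2 ≤ ∑ i, (Φ.mulVec x) i ^ 2 ∧
      ∑ i, (Φ.mulVec x) i ^ 2 ≤ (1 + δ) * ∑ i, x i ^ 2}

/-- The column submatrix of `Φ` with columns indexed by the finite set `I`. -/
def colSub {M N : ℕ} (Φ : Matrix (Fin M) (Fin N) ℝ) (I : Finset (Fin N)) :
    Matrix (Fin M) {j // j ∈ I} ℝ :=
  Matrix.of fun i j => Φ i j.val

/-- `Φ` is full spark: every set of at most `M` columns is linearly independent. -/
def FullSpark {M N : ℕ} (Φ : Matrix (Fin M) (Fin N) ℝ) : Prop :=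
  ∀ S : Finset (Fin N), S.card ≤ M →
    LinearIndependent ℝ (fun j : {j // j ∈ S} => fun i => Φ i j.val)

def extS {N : ℕ} (S : Finset (Fin N)) (z : {j // j ∈ S} → ℝ) : Fin N → ℝ :=
  fun j => if h : j ∈ S then z ⟨j, h⟩ else 0

lemma mulVec_ext {M N : ℕ} (Φ : Matrix (Fin M) (Fin N) ℝ) (S : Finset (Fin N))
    (z : {j // j ∈ S} → ℝ) :
    (colSub Φ S).mulVec z = Φ.mulVec (extS S z) := by
  funext i
  simp only [Matrix.mulVec, dotProduct, colSub, Matrix.of_apply]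
  have h1 : ∑ x : {j // j ∈ S}, Φ i x.val * z x = ∑ j ∈ S, Φ i j * extS S z j := by
    rw [Finset.sum_subtype S (fun j => Iff.rfl) (fun j => Φ i j * extS S z j)]
    apply Finset.sum_congr rfl
    intro j _
    simp [extS, j.prop]
  rw [h1]
  apply Finset.sum_subset (Finset.subset_univ S)
  intro j _ hj
  simp [extS, hj]

lemma enorm_nonneg {ι : Type*} [Fintype ι] (v : ι → ℝ) : 0 ≤ _root_.enorm v :=
  Real.sqrt_nonneg _

lemma enorm_eq_zero_real {ι : Type*} [Fintype ι] (v : ι → ℝ) : _root_.enorm v = 0 ↔ v = 0 := by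
  unfold _root_.enorm
  rw [Real.sqrt_eq_zero (Finset.sum_nonneg fun i _ => sq_nonneg _)]
  constructor
  · intro h
    funext i
    have := (Finset.sum_eq_zero_iff_of_nonneg (fun i _ => sq_nonneg (v i))).mp h i (Finset.mem_univ i)
    exact pow_eq_zero_iff two_ne_zero |>.mp this
  · intro h; simp [h]

lemma zero_of_fullspark {M N : ℕ} (Φ : Matrix (Fin M) (Fin N) ℝ) (hΦ : FullSpark Φ)
    (w : Fin N → ℝ) (U : Finset (Fin N)) (hU : U.card ≤ M)
    (hsupp : ∀ j, w j ≠ 0 → j ∈ U) (h : Φ.mulVec w = 0) : w = 0 := by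
  have hli := hΦ U hU
  rw [Fintype.linearIndependent_iff] at hli
  have key : ∀ j : {j // j ∈ U}, w j.val = 0 := by
    apply hli (fun j => w j.val)
    funext i
    have : (∑ j : {j // j ∈ U}, w j.val • (fun i => Φ i j.val)) i
        = ∑ j : {j // j ∈ U}, w j.val * Φ i j.val := by
      simp [Finset.sum_apply]
    rw [this]
    have h2 : ∑ j : {j // j ∈ U}, w j.val * Φ i j.val = ∑ j ∈ U, w j * Φ i j :=
      (Finset.sum_subtype U (fun j => Iff.rfl) (fun j => w j * Φ i j)).symm
    have h3 : ∑ j ∈ U, w j * Φ i j = ∑ j : Fin N, w j * Φ i j := by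
      apply Finset.sum_subset (Finset.subset_univ U)
      intro j _ hj
      by_cases hw : w j = 0
      · simp [hw]
      · exact absurd (hsupp j hw) hj
    have h4 : ∑ j : Fin N, w j * Φ i j = Φ.mulVec w i := by
      simp [Matrix.mulVec, dotProduct, mul_comm]
    rw [h2, h3, h4, h]
  funext j
  by_cases hj : j ∈ U
  · exact key ⟨j, hj⟩
  · by_contra hne; exact hj (hsupp j hne)

theorem stmt_13 {M N : ℕ} (Φ : Matrix (Fin M) (Fin N) ℝ) (hΦ : FullSpark Φ)
    (x : Fin N → ℝ) (T : Finset (Fin N)) (hT : ∀ j, j ∈ T ↔ x j ≠ 0)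
    (K : ℕ) (hK : T.card = K)
    (y : Fin M → ℝ) (hy : y = Φ.mulVec x)
    (S : Finset (Fin N)) (hS : S.Nonempty) (hSM : S.card + K ≤ M)
    (zhat : {j // j ∈ S} → ℝ)
    (hzhat : ∀ z : {j // j ∈ S} → ℝ,
      _root_.enorm (y - (colSub Φ S).mulVec zhat) ≤ _root_.enorm (y - (colSub Φ S).mulVec z)) :
    y - (colSub Φ S).mulVec zhat = 0 ↔ T ⊆ S := by
  constructor
  · intro hres
    have heq : Φ.mulVec x = Φ.mulVec (extS S zhat) := by
      rw [← hy, ← mulVec_ext]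
      exact sub_eq_zero.mp hres
    have hzero : Φ.mulVec (x - extS S zhat) = 0 := by
      rw [Matrix.mulVec_sub, heq, sub_self]
    have hcard : (T ∪ S).card ≤ M := by
      calc (T ∪ S).card ≤ T.card + S.card := Finset.card_union_le _ _
        _ = S.card + K := by rw [hK]; ring
        _ ≤ M := hSM
    have hw : x - extS S zhat = 0 := by
      apply zero_of_fullspark Φ hΦ _ (T ∪ S) hcard _ hzero
      intro j hj
      by_contra hjn
      simp only [Finset.mem_union, not_or] at hjn
      apply hj
      have hx : x j = 0 := by
        by_contra hx; exact hjn.1 ((hT j).mpr hx)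
      have he : extS S zhat j = 0 := by simp [extS, hjn.2]
      simp [Pi.sub_apply, hx, he]
    have hxe : x = extS S zhat := sub_eq_zero.mp hw
    intro j hjT
    have hxj := (hT j).mp hjT
    rw [hxe] at hxj
    by_contra hjS
    simp [extS, hjS] at hxj
  · intro hTS
    set z : {j // j ∈ S} → ℝ := fun j => x j.val with hz
    have hext : extS S z = x := by
      funext j
      by_cases hj : j ∈ S
      · simp [extS, hj, hz]
      · have : x j = 0 := by
          by_contra hx; exact hj (hTS ((hT j).mpr hx))
        simp [extS, hj, this]
    have hres : y - (colSub Φ S).mulVec z = 0 := by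
      rw [mulVec_ext, hext, hy, sub_self]
    have h1 := hzhat z
    rw [hres, (enorm_eq_zero_real (0 : Fin M → ℝ)).mpr rfl] at h1
    exact (enorm_eq_zero_real _).mp (le_antisymm h1 (enorm_nonneg _))
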